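/- Every torsion subgroup of GL_n(ℚ) has order at most some constant N(n) depending only on n. -/

import Mathlib

open Matrix

section KeyStep
open Finset
theorem key_step {ι : Type*} [Fintype ι] [DecidableEq ι] (p : ℕ) (hp : p.Prime)
    (k : ℕ) (hk : 1 ≤ k) (C : Matrix ι ι ℤ)
    (h : (1 + (3:ℤ)^k • C)^p = 1) (i j : ι) : (3:ℤ) ∣ C i j := by
  have hcomm : Commute ((3:ℤ)^k • C) (1 : Matrix ι ι ℤ) := Commute.one_right _
  have hexp := hcomm.add_pow p
  rw [add_comm, hexp] at h
  have key : ∑ m ∈ range (p+1), ((3:ℤ)^(k*m) * (p.choose m : ℤ)) • C^m = 1 := by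
    rw [← h]
    refine Finset.sum_congr rfl fun m _ => ?_
    rw [one_pow, mul_one, smul_pow, ← pow_mul,
      smul_mul_assoc, mul_smul, ← (Nat.cast_commute (p.choose m) (C^m)).eq,
      ← nsmul_eq_mul, ← Nat.cast_smul_eq_nsmul ℤ]
  rw [range_eq_Ico, Finset.sum_eq_sum_Ico_succ_bot (Nat.succ_pos p) _,
    Finset.sum_eq_sum_Ico_succ_bot (by have := hp.two_le; omega : 0 + 1 < p + 1) _] at key
  simp only [mul_zero, pow_zero, Nat.choose_zero_right, Nat.cast_one, mul_one, one_smul,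
    Nat.choose_one_right, pow_one, zero_add, show ((1:ℕ)+1) = 2 by norm_num] at key
  have key0 := add_left_cancel (key.trans (add_zero (1 : Matrix ι ι ℤ)).symm)
  have key2 : ((3:ℤ)^k * (p:ℤ)) • C = -∑ m ∈ Ico 2 (p+1), ((3:ℤ)^(k*m) * (p.choose m : ℤ)) • C^m :=
    eq_neg_of_add_eq_zero_left key0
  have hentry : (3:ℤ)^k * (p:ℤ) * C i j
      = -∑ m ∈ Ico 2 (p+1), ((3:ℤ)^(k*m) * (p.choose m : ℤ)) * (C^m) i j := by
    have h5 := congrFun (congrFun key2 i) j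
    simp only [Matrix.smul_apply, smul_eq_mul, Matrix.neg_apply, Matrix.sum_apply] at h5
    exact h5
  have cancel : ∀ s x : ℤ, ((3:ℤ)^k * s ∣ 3^k * x) → s ∣ x := fun s x hd =>
    (mul_dvd_mul_iff_left (by positivity : (3:ℤ)^k ≠ 0)).mp hd
  by_cases hp3 : p = 3
  · subst hp3
    have hdvd : (3:ℤ)^(k+2) ∣ ∑ m ∈ Ico 2 (3+1), ((3:ℤ)^(k*m) * ((3:ℕ).choose m : ℤ)) * (C^m) i j := by
      refine Finset.dvd_sum fun m hm => ?_
      simp only [Finset.mem_Ico] at hm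
      have hm' : m = 2 ∨ m = 3 := by omega
      rcases hm' with rfl | rfl
      · refine Dvd.dvd.mul_right ?_ _
        have h2 : ((3:ℕ).choose 2 : ℤ) = 3 := by norm_num [Nat.choose]
        rw [h2, ← pow_succ]
        exact pow_dvd_pow 3 (by omega)
      · refine Dvd.dvd.mul_right ?_ _
        have h2 : ((3:ℕ).choose 3 : ℤ) = 1 := by norm_num
        rw [h2, mul_one]
        exact pow_dvd_pow 3 (by omega)
    rw [show ((3:ℤ)^(k+2)) = 3^k * 3^2 from pow_add 3 k 2] at hdvd
    have hd2 : (3:ℤ)^k * 3^2 ∣ 3^k * (((3:ℕ):ℤ) * C i j) := by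
      rw [show (3:ℤ)^k * (((3:ℕ):ℤ) * C i j) = -(-((3:ℤ)^k * ((3:ℕ):ℤ) * C i j)) by ring, hentry]
      simpa using hdvd
    have h9 := cancel _ _ hd2
    have h9' : (3:ℤ) * 3 ∣ 3 * C i j := by
      rw [show (3:ℤ)*3 = 3^2 by norm_num]
      exact_mod_cast h9
    exact (mul_dvd_mul_iff_left (by norm_num : (3:ℤ) ≠ 0)).mp h9'
  · have hdvd : (3:ℤ)^(k+1) ∣ ∑ m ∈ Ico 2 (p+1), ((3:ℤ)^(k*m) * (p.choose m : ℤ)) * (C^m) i j := by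
      refine Finset.dvd_sum fun m hm => ?_
      simp only [Finset.mem_Ico] at hm
      exact Dvd.dvd.mul_right (Dvd.dvd.mul_right (pow_dvd_pow 3 (by nlinarith [hm.1])) _) _
    rw [show ((3:ℤ)^(k+1)) = 3^k * 3 from pow_succ 3 k] at hdvd
    have hd2 : (3:ℤ)^k * 3 ∣ 3^k * ((p:ℤ) * C i j) := by
      rw [show (3:ℤ)^k * ((p:ℤ) * C i j) = -(-((3:ℤ)^k * (p:ℤ) * C i j)) by ring, hentry]
      simpa using hdvd
    have h3 := cancel _ _ hd2
    rcases Int.Prime.dvd_mul' (by norm_num : Nat.Prime 3) (by exact_mod_cast h3) with hpp | hc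
    · exfalso
      have : (3:ℕ) ∣ p := by exact_mod_cast hpp
      exact hp3 ((Nat.prime_dvd_prime_iff_eq (by norm_num) hp).mp this).symm
    · exact hc

end KeyStep

section Mink

variable {ι : Type*} [Fintype ι] [DecidableEq ι]

/-- divisible matrix extraction -/
theorem extract (B : Matrix ι ι ℤ) (h : ∀ i j, (3:ℤ) ∣ B i j) :
    ∃ C : Matrix ι ι ℤ, B = (3:ℤ) • C := by
  refine ⟨Matrix.of fun i j => B i j / 3, ?_⟩
  ext i j
  simp only [Matrix.smul_apply, Matrix.of_apply, smul_eq_mul]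
  exact (Int.mul_ediv_cancel' (h i j)).symm

theorem prime_order_case (p : ℕ) (hp : p.Prime) (A : GL ι ℤ) (hA : A ^ p = 1)
    (hmod : ∀ i j, (3:ℤ) ∣ ((A : Matrix ι ι ℤ) i j - (1 : Matrix ι ι ℤ) i j)) : A = 1 := by
  have hAp : ((A : Matrix ι ι ℤ))^p = 1 := by
    have := congrArg Units.val hA
    simpa using this
  have main : ∀ t : ℕ, ∃ C : Matrix ι ι ℤ, (A : Matrix ι ι ℤ) = 1 + (3:ℤ)^(t+1) • C := by
    intro t
    induction t with
    | zero =>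
      obtain ⟨C, hC⟩ := extract _ hmod
      exact ⟨C, by rw [pow_one]; rw [← hC]; ext i j; show _ = (1 : Matrix ι ι ℤ) i j + ((A : Matrix ι ι ℤ) i j - (1 : Matrix ι ι ℤ) i j); ring⟩
    | succ t ih =>
      obtain ⟨C, hC⟩ := ih
      have h1 : (1 + (3:ℤ)^(t+1) • C)^p = 1 := by rw [← hC]; exact hAp
      obtain ⟨C', hC'⟩ := extract C (fun i j => key_step p hp (t+1) (by omega) C h1 i j)
      refine ⟨C', ?_⟩
      rw [hC, hC', smul_smul, ← pow_succ]
  apply Units.ext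
  ext i j
  have hzero : (A : Matrix ι ι ℤ) i j - (1 : Matrix ι ι ℤ) i j = 0 := by
    set d : ℤ := (A : Matrix ι ι ℤ) i j - (1 : Matrix ι ι ℤ) i j with hd
    by_contra hne
    obtain ⟨C, hC⟩ := main d.natAbs
    have hEntry : (A : Matrix ι ι ℤ) i j = (1 : Matrix ι ι ℤ) i j + (3:ℤ)^(d.natAbs+1) * C i j := by
      have := congrFun (congrFun hC i) j
      simp only [Matrix.add_apply, Matrix.smul_apply, smul_eq_mul] at this
      exact this
    have hdvd : (3:ℤ)^(d.natAbs+1) ∣ d := ⟨C i j, by rw [hd]; linarith [hEntry]⟩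
    have hle := Int.le_of_dvd (abs_pos.mpr hne) ((dvd_abs _ _).mpr hdvd)
    have : (d.natAbs : ℤ) < 3^(d.natAbs + 1) := by
      have h1 : d.natAbs < 3^(d.natAbs+1) := lt_of_lt_of_le (Nat.lt_pow_self (n := d.natAbs) (by norm_num : 1 < 3)) (Nat.pow_le_pow_right (by norm_num) (by omega))
      exact_mod_cast h1
    rw [Int.abs_eq_natAbs] at hle
    have habs : 1 ≤ (d.natAbs : ℤ) := by
      have : d.natAbs ≠ 0 := fun h0 => hne (Int.natAbs_eq_zero.mp h0)
      omega
    omega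
  show (A : Matrix ι ι ℤ) i j = (1 : Matrix ι ι ℤ) i j
  linarith [hzero]

/-- reduction mod 3 -/
noncomputable def chi (ι : Type*) [Fintype ι] [DecidableEq ι] :
    GL ι ℤ →* GL ι (ZMod 3) :=
  Matrix.GeneralLinearGroup.map (Int.castRingHom (ZMod 3))

theorem chi_eq_one_iff (A : GL ι ℤ) :
    chi ι A = 1 ↔ ∀ i j, (3:ℤ) ∣ ((A : Matrix ι ι ℤ) i j - (1 : Matrix ι ι ℤ) i j) := by
  rw [Units.ext_iff, ← Matrix.ext_iff]
  have hent : ∀ i j, ((chi ι A : Matrix ι ι (ZMod 3)) i j)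
      = (((A : Matrix ι ι ℤ) i j : ℤ) : ZMod 3) := fun i j => by
    simp [chi, Matrix.GeneralLinearGroup.map_apply]
  have hone : ∀ i j, ((1 : GL ι (ZMod 3)) : Matrix ι ι (ZMod 3)) i j
      = (((1 : Matrix ι ι ℤ) i j : ℤ) : ZMod 3) := fun i j => by
    by_cases hij : i = j <;> simp [Matrix.one_apply, hij]
  constructor
  · intro h i j
    have h2 : ((((A : Matrix ι ι ℤ) i j - (1:Matrix ι ι ℤ) i j : ℤ)) : ZMod 3) = 0 := by
      rw [Int.cast_sub, ← hent i j, ← hone i j, h i j, sub_self]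
    exact_mod_cast (ZMod.intCast_zmod_eq_zero_iff_dvd _ 3).mp h2
  · intro h i j
    have h2 := (ZMod.intCast_zmod_eq_zero_iff_dvd ((A : Matrix ι ι ℤ) i j - (1:Matrix ι ι ℤ) i j) 3).mpr
      (by exact_mod_cast h i j)
    rw [Int.cast_sub, sub_eq_zero] at h2
    rw [hent i j, hone i j, h2]

theorem finite_order_case (A : GL ι ℤ) (hA : IsOfFinOrder A)
    (hchi : chi ι A = 1) : A = 1 := by
  have hmod := (chi_eq_one_iff A).mp hchi
  by_contra hne
  set m := orderOf A with hm
  have hm1 : m ≠ 1 := fun h => hne (orderOf_eq_one_iff.mp h)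
  have hmpos : 0 < m := hA.orderOf_pos
  have hp := Nat.minFac_prime hm1
  set p := m.minFac with hpdef
  set B := A ^ (m / p) with hB
  have hBp : B ^ p = 1 := by
    rw [hB, ← pow_mul, Nat.div_mul_cancel (Nat.minFac_dvd m), hm]
    exact pow_orderOf_eq_one A
  have hBmod : ∀ i j, (3:ℤ) ∣ ((B : Matrix ι ι ℤ) i j - (1 : Matrix ι ι ℤ) i j) := by
    refine (chi_eq_one_iff B).mp ?_
    rw [hB, map_pow, hchi, one_pow]
  have := prime_order_case p hp B hBp hBmod
  -- B = 1 contradiction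
  rw [hB] at this
  have hdvd := orderOf_dvd_of_pow_eq_one this
  rw [← hm] at hdvd
  have hlt : m / p < m := Nat.div_lt_self hmpos hp.one_lt
  have h0 : 0 < m / p := Nat.div_pos (Nat.minFac_le hmpos) hp.pos
  have hle : m ≤ m / p := Nat.le_of_dvd h0 hdvd
  omega

end Mink
section Lattice

noncomputable section

variable (n : ℕ) (G : Subgroup (GL (Fin n) ℚ)) [Finite G]

/-- generating set of the invariant lattice -/
def latS : Set (Fin n → ℚ) :=
  Set.range (fun gi : G × Fin n =>
    ((gi.1 : GL (Fin n) ℚ) : Matrix (Fin n) (Fin n) ℚ).mulVec (Pi.single gi.2 1))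

/-- the invariant lattice -/
def latL : Submodule ℤ (Fin n → ℚ) := Submodule.span ℤ (latS n G)

instance : Module.Finite ℤ (latL n G) :=
  Module.Finite.span_of_finite ℤ (Set.finite_range _)

instance : Module.Free ℤ (latL n G) := Module.free_of_finite_type_torsion_free'

lemma single_mem_latS (j : Fin n) : Pi.single j (1:ℚ) ∈ latS n G :=
  ⟨(1, j), by
    simp only [OneMemClass.coe_one, Units.val_one, Matrix.one_mulVec]⟩

/-- the ℚ-linear automorphism attached to `g` -/
def phi (g : GL (Fin n) ℚ) : (Fin n → ℚ) ≃ₗ[ℚ] (Fin n → ℚ) :=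
  LinearMap.GeneralLinearGroup.generalLinearEquiv ℚ _ (Matrix.GeneralLinearGroup.toLin g)

lemma phi_apply (g : GL (Fin n) ℚ) (v : Fin n → ℚ) :
    phi n g v = (g : Matrix (Fin n) (Fin n) ℚ).mulVec v := rfl

lemma map_latL_le (g : G) :
    (latL n G).map ((phi n (g : GL (Fin n) ℚ)).restrictScalars ℤ).toLinearMap ≤ latL n G := by
  rw [latL, Submodule.map_span_le]
  rintro x ⟨⟨h, i⟩, rfl⟩
  refine Submodule.subset_span ⟨(g * h, i), ?_⟩
  simp only [LinearEquiv.coe_coe, LinearEquiv.restrictScalars_apply, phi_apply,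
    Matrix.mulVec_mulVec]
  rfl

lemma map_latL (g : G) :
    (latL n G).map ((phi n (g : GL (Fin n) ℚ)).restrictScalars ℤ).toLinearMap = latL n G := by
  refine le_antisymm (map_latL_le n G g) ?_
  intro x hx
  have h2 := map_latL_le n G g⁻¹
  have hx2 : ((phi n ((g⁻¹ : G) : GL (Fin n) ℚ)).restrictScalars ℤ) x ∈ latL n G :=
    h2 ⟨x, hx, rfl⟩
  refine ⟨_, hx2, ?_⟩
  simp only [LinearEquiv.coe_coe, LinearEquiv.restrictScalars_apply, phi_apply]
  rw [Matrix.mulVec_mulVec]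
  have : ((g : GL (Fin n) ℚ) : Matrix (Fin n) (Fin n) ℚ) *
      (((g⁻¹ : G) : GL (Fin n) ℚ) : Matrix (Fin n) (Fin n) ℚ) = 1 := by
    have : (g : GL (Fin n) ℚ) * ((g⁻¹ : G) : GL (Fin n) ℚ) = 1 := by
      rw [← Subgroup.coe_mul, mul_inv_cancel]; rfl
    calc _ = (((g : GL (Fin n) ℚ) * ((g⁻¹ : G) : GL (Fin n) ℚ) : GL (Fin n) ℚ) :
        Matrix (Fin n) (Fin n) ℚ) := rfl
      _ = _ := by rw [this]; rfl
  rw [this, Matrix.one_mulVec]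

/-- the action of `G` on the lattice -/
def rho : G →* (latL n G ≃ₗ[ℤ] latL n G) where
  toFun g := LinearEquiv.ofSubmodules _ _ _ (map_latL n G g)
  map_one' := by
    apply LinearEquiv.toLinearMap_injective
    apply LinearMap.ext
    intro x
    apply Subtype.ext
    simp only [LinearEquiv.coe_coe, LinearEquiv.ofSubmodules_apply,
      LinearEquiv.restrictScalars_apply, phi_apply]
    simp [Matrix.one_mulVec]
  map_mul' g h := by
    apply LinearEquiv.toLinearMap_injective
    apply LinearMap.ext
    intro x
    apply Subtype.ext
    simp only [LinearEquiv.coe_coe, LinearEquiv.ofSubmodules_apply,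
      LinearEquiv.restrictScalars_apply, phi_apply, LinearEquiv.trans_apply]
    show _ = ((LinearEquiv.ofSubmodules _ _ _ (map_latL n G g)) ((LinearEquiv.ofSubmodules _ _ _ (map_latL n G h)) x) : Fin n → ℚ)
    simp only [LinearEquiv.ofSubmodules_apply, LinearEquiv.restrictScalars_apply, phi_apply,
      Matrix.mulVec_mulVec]
    congr 1

end

end Lattice
section Final

variable (n : ℕ) (G : Subgroup (GL (Fin n) ℚ)) [Finite G]

lemma rho_injective : Function.Injective ⇑(rho n G) := by
  refine (injective_iff_map_eq_one _).mpr fun g hg => ?_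
  have key2 : ∀ x ∈ latL n G,
      (((g : GL (Fin n) ℚ) : Matrix (Fin n) (Fin n) ℚ)).mulVec x = x := by
    intro x hx
    have hx' : ((rho n G g ⟨x, hx⟩ : latL n G) : Fin n → ℚ) = x := by rw [hg]; rfl
    rw [show ((rho n G g ⟨x, hx⟩ : latL n G) : Fin n → ℚ)
        = (((g : GL (Fin n) ℚ) : Matrix (Fin n) (Fin n) ℚ)).mulVec x from rfl] at hx'
    exact hx'
  have hsingle : ∀ j, (((g : GL (Fin n) ℚ) : Matrix (Fin n) (Fin n) ℚ)).mulVec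
      (Pi.single j 1) = Pi.single j 1 :=
    fun j => key2 _ (Submodule.subset_span (single_mem_latS n G j))
  apply Subtype.ext
  apply Units.ext
  apply Matrix.ext
  intro i j
  have := congrFun (hsingle j) i
  simp only [Matrix.mulVec_single, mul_one, MulOpposite.op_one, one_smul, Matrix.col_apply] at this
  rw [this, Subgroup.coe_one, Units.val_one, Matrix.one_apply, Pi.single_apply, eq_comm]

end Final

/-- Every torsion subgroup of `GL_n(ℚ)` has order bounded by a constant depending only on `n`. -/
theorem torsion_subgroups_of_GL_rat_bounded (n : ℕ) :
    ∃ N : ℕ, ∀ G : Subgroup (GL (Fin n) ℚ),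
      (∀ g ∈ G, IsOfFinOrder g) → Nat.card G ≤ N := by
  classical
  refine ⟨3^(n*n), fun G hGtors => ?_⟩
  rcases finite_or_infinite G with hfin | hinf
  · set ι := Module.Free.ChooseBasisIndex ℤ (latL n G) with hι
    letI : DecidableEq ι := Classical.decEq _
    let b : Module.Basis ι ℤ (latL n G) := Module.Free.chooseBasis ℤ (latL n G)
    have hcard : Fintype.card ι ≤ n := by
      have hli : LinearIndependent ℤ (fun i => ((b i : latL n G) : Fin n → ℚ)) :=
        b.linearIndependent.map' (latL n G).subtype (Submodule.ker_subtype _)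
      have hliQ : LinearIndependent ℚ (fun i => ((b i : latL n G) : Fin n → ℚ)) :=
        (LinearIndependent.iff_fractionRing ℤ ℚ).mp hli
      have := hliQ.fintype_card_le_finrank
      simpa [Module.finrank_pi] using this
    let T1 : (latL n G ≃ₗ[ℤ] latL n G) ≃* (Module.End ℤ (latL n G))ˣ :=
      (LinearMap.GeneralLinearGroup.generalLinearEquiv ℤ _).symm
    let T2 : (Module.End ℤ (latL n G))ˣ ≃* (Matrix ι ι ℤ)ˣ :=
      Units.mapEquiv (LinearMap.toMatrixAlgEquiv b).toRingEquiv.toMulEquiv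
    let F : G →* GL ι (ZMod 3) :=
      (chi ι).comp ((T2.toMonoidHom.comp T1.toMonoidHom).comp (rho n G))
    have hFinj : Function.Injective ⇑F := by
      refine (injective_iff_map_eq_one F).mpr fun g hFg => ?_
      have hfing : IsOfFinOrder g := Submonoid.isOfFinOrder_coe.mp (hGtors g g.2)
      have hfin2 : IsOfFinOrder (T2 (T1 (rho n G g))) :=
        (T2.toMonoidHom.comp (T1.toMonoidHom.comp (rho n G))).isOfFinOrder hfing
      have h1 : T2 (T1 (rho n G g)) = 1 := finite_order_case _ hfin2 hFg
      have h2 : rho n G g = 1 := by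
        apply T1.injective
        apply T2.injective
        simpa using h1
      exact rho_injective n G (h2.trans (map_one (rho n G)).symm)
    calc Nat.card G ≤ Nat.card (GL ι (ZMod 3)) := Nat.card_le_card_of_injective F hFinj
      _ ≤ Nat.card (Matrix ι ι (ZMod 3)) :=
          Nat.card_le_card_of_injective Units.val Units.val_injective
      _ = Nat.card (ι → ι → ZMod 3) := Nat.card_congr (Matrix.of).symm
      _ ≤ 3^(n*n) := by
          rw [Nat.card_fun, Nat.card_fun, Nat.card_zmod, Nat.card_eq_fintype_card, ← pow_mul]
          exact Nat.pow_le_pow_right (by norm_num) (Nat.mul_le_mul hcard hcard)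
  · rw [Nat.card_eq_zero_of_infinite]
    positivity
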